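/- arXiv:1501.03774 — 2 statements merged into one kernel-verified Lean document; each statement's English description precedes it below -/
import Mathlib

section
/- Consider the capacitated graph obtained from the complete graph K₄ on vertices {u, v, w, t} by deleting the edge uv, assigning capacity (4,1) ⊆ ℝ/5ℤ to the edges uw and vw, and capacity (1,4) to the edges ut, vt, and wt. The open 5-capacity of the resulting capacitated g-edge with terminals u and v equals (1,4). (This g-edge is called the thick (1,4)-edge.) -/
open Finset


open Finset

/-- A finite multigraph given with a reference orientation: each edge `e` goes
from `src e` to `tgt e`.  An orientation of the graph is a sign function
`σ : E → ℤˣ` telling, for each edge, whether it keeps (`1`) or reverses (`-1`)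
its reference direction. -/
structure Multigraph where
  V : Type
  E : Type
  [fintV : Fintype V]
  [fintE : Fintype E]
  [decV : DecidableEq V]
  [decE : DecidableEq E]
  src : E → V
  tgt : E → V

attribute [instance] Multigraph.fintV Multigraph.fintE Multigraph.decV Multigraph.decE

/-- `f` is a flow with respect to the reference orientation: at every vertex the
sum over outgoing edges equals the sum over incoming edges. -/
def Multigraph.IsFlow (G : Multigraph) {M : Type*} [AddCommMonoid M] (f : G.E → M) : Prop :=
  ∀ v : G.V,
    ∑ e ∈ Finset.univ.filter (fun e => G.src e = v), f e =
    ∑ e ∈ Finset.univ.filter (fun e => G.tgt e = v), f e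

/-- `f` is a flow on the orientation `σ` of `G` (values of `f` are read in the
direction given by `σ`). -/
def Multigraph.IsFlowOn (G : Multigraph) {M : Type*} [AddCommGroup M]
    (σ : G.E → ℤˣ) (f : G.E → M) : Prop :=
  G.IsFlow (fun e => ((σ e : ℤ) • f e))

/-- The open interval `(a,b)` of `ℝ/rℤ`: the points traversed strictly clockwise
from `a` to `b`, with the convention `(a,a) = ℝ/rℤ \ {a}`. -/
noncomputable def openArc (r a b : ℝ) : Set (AddCircle r) :=
  (fun t : ℝ => (t : AddCircle r)) '' Set.Ioo a (a + (r - Int.fract ((a - b) / r) * r))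

/-- The closed interval `[a,b]` of `ℝ/rℤ`: the points traversed clockwise from
`a` to `b`, endpoints included, with the convention `[a,a] = {a}`. -/
noncomputable def closedArc (r a b : ℝ) : Set (AddCircle r) :=
  (fun t : ℝ => (t : AddCircle r)) '' Set.Icc a (a + Int.fract ((b - a) / r) * r)

/-- `G` has a circular nowhere-zero `r`-flow: an orientation together with a
real-valued flow all of whose values lie in `[1, r-1]`. -/
def Multigraph.HasCNZF (G : Multigraph) (r : ℝ) : Prop :=
  ∃ (σ : G.E → ℤˣ) (f : G.E → ℝ), G.IsFlowOn σ f ∧ ∀ e, f e ∈ Set.Icc (1:ℝ) (r - 1)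

/-- The circular flow number of `G`, as an extended real (`⊤` if `G` admits no
circular nowhere-zero `r`-flow for any `r`, e.g. if `G` has a bridge). -/
noncomputable def circFlowNumber (G : Multigraph) : EReal :=
  sInf {x : EReal | ∃ r : ℝ, x = (r : EReal) ∧ G.HasCNZF r}

/-- The graph `G ∪ e₀` obtained from `G` by adding one extra edge `e₀ = none`
joining `u` to `v`. -/
def Multigraph.addEdge (G : Multigraph) (u v : G.V) : Multigraph where
  V := G.V
  E := Option G.E
  src := fun e => e.elim u G.src
  tgt := fun e => e.elim v G.tgt

/-- The capacity of the capacitated g-edge `(G, cap)` with terminals `u,v`: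
all values `f e₀` of modular flows `f` on `G ∪ e₀` (over all orientations) whose
value on each edge `e` of `G` lies in the prescribed set `cap e`. -/
def CPcap (r : ℝ) (G : Multigraph) (cap : G.E → Set (AddCircle r)) (u v : G.V) :
    Set (AddCircle r) :=
  {t | ∃ (σ : Option G.E → ℤˣ) (f : Option G.E → AddCircle r),
        (G.addEdge u v).IsFlowOn σ f ∧ (∀ e : G.E, f (some e) ∈ cap e) ∧ f none = t}

/-- The open `r`-capacity `CP_r(G_{u,v})` of the g-edge `G_{u,v}`. -/
noncomputable def CP (r : ℝ) (G : Multigraph) (u v : G.V) : Set (AddCircle r) :=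
  CPcap r G (fun _ => openArc r 1 (r - 1)) u v

/-- A capacitated graph `(G, cap)` admits a flow respecting all capacities
(for `cap e = (1,4) ⊆ ℝ/5ℤ` everywhere this is a sub-5-MCNZF). -/
def HasCapFlow (r : ℝ) (G : Multigraph) (cap : G.E → Set (AddCircle r)) : Prop :=
  ∃ (σ : G.E → ℤˣ) (f : G.E → AddCircle r), G.IsFlowOn σ f ∧ ∀ e, f e ∈ cap e

/-- Deletion of the edge `e₀`. -/
def Multigraph.deleteEdge (G : Multigraph) (e₀ : G.E) : Multigraph where
  V := G.V
  E := {e : G.E // e ≠ e₀}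
  src := fun e => G.src e.1
  tgt := fun e => G.tgt e.1

/-- Degree of a vertex (loops count twice). -/
def Multigraph.degree (G : Multigraph) (v : G.V) : ℕ :=
  (Finset.univ.filter (fun e => G.src e = v)).card +
  (Finset.univ.filter (fun e => G.tgt e = v)).card

/-- The tail of edge `e` in the orientation `σ`. -/
def Multigraph.osrc (G : Multigraph) (σ : G.E → ℤˣ) (e : G.E) : G.V :=
  if σ e = 1 then G.src e else G.tgt e

/-- The head of edge `e` in the orientation `σ`. -/
def Multigraph.otgt (G : Multigraph) (σ : G.E → ℤˣ) (e : G.E) : G.V :=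
  if σ e = 1 then G.tgt e else G.src e

/-- `K₄` on the vertices `u = 0`, `v = 1`, `w = 2`, `t = 3`, with the edge `uv`
deleted.  The five remaining edges, in order, are `uw, vw, ut, vt, wt`. -/
def K4minus : Multigraph where
  V := Fin 4
  E := Fin 5
  src := ![0, 1, 0, 1, 2]
  tgt := ![2, 2, 3, 3, 3]

/-- Capacities of the thick `(1,4)`-edge: `(4,1)` on `uw` and `vw`, `(1,4)` on
`ut`, `vt` and `wt`. -/
noncomputable def thickCap : K4minus.E → Set (AddCircle (5 : ℝ)) :=
  ![openArc 5 4 1, openArc 5 4 1, openArc 5 1 4, openArc 5 1 4, openArc 5 1 4]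

lemma coeAdd (x y : ℝ) : ((x:AddCircle (5:ℝ)) + (y:ℝ)) = ((x+y : ℝ) : AddCircle (5:ℝ)) := rfl

lemma coe5 (x y : ℝ) : ((x : AddCircle (5:ℝ)) = (y:ℝ)) ↔ ∃ k : ℤ, y - x = 5 * k := by
  rw [QuotientAddGroup.eq, AddSubgroup.mem_zmultiples_iff]
  constructor
  · rintro ⟨k, hk⟩
    refine ⟨k, ?_⟩
    simp only [zsmul_eq_mul] at hk
    push_cast at hk
    linarith
  · rintro ⟨k, hk⟩
    refine ⟨k, ?_⟩
    simp only [zsmul_eq_mul]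
    push_cast
    linarith

lemma arc14 : openArc 5 1 4 = (fun t:ℝ => (t:AddCircle (5:ℝ))) '' Set.Ioo 1 4 := by
  unfold openArc
  norm_num [Int.fract]

lemma arc41 : openArc 5 4 1 = (fun t:ℝ => (t:AddCircle (5:ℝ))) '' Set.Ioo 4 6 := by
  unfold openArc
  norm_num [Int.fract]

lemma sign_lift (u : ℤˣ) (c : AddCircle (5:ℝ)) {x lo hi : ℝ} (hme : x ∈ Set.Ioo lo hi)
    (hc : ((x:ℝ) : AddCircle (5:ℝ)) = c) (hsum : lo + hi = 5 ∨ lo + hi = 10) :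
    ∃ y ∈ Set.Ioo lo hi, ((y:ℝ) : AddCircle (5:ℝ)) = (u:ℤ) • c := by
  obtain ⟨hx1, hx2⟩ := hme
  rcases Int.units_eq_one_or u with h | h <;> subst h
  · exact ⟨x, ⟨hx1, hx2⟩, by simpa using hc⟩
  · refine ⟨lo + hi - x, ⟨by linarith, by linarith⟩, ?_⟩
    have h1 : ((lo + hi - x : ℝ) : AddCircle (5:ℝ)) = ((-x : ℝ) : AddCircle (5:ℝ)) := by
      rcases hsum with h | h
      · exact (coe5 _ _).mpr ⟨-1, by push_cast; linarith⟩
      · exact (coe5 _ _).mpr ⟨-2, by push_cast; linarith⟩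
    rw [h1, show ((-x:ℝ):AddCircle (5:ℝ)) = -((x:ℝ):AddCircle (5:ℝ)) from rfl, hc]
    simp

lemma buildFlow (F : Option (Fin 5) → ℝ)
    (h0 : F none + (F (some 0) + F (some 2)) = 0)
    (h1 : F (some 1) + F (some 3) = F none)
    (h2 : F (some 4) = F (some 0) + F (some 1))
    (h3 : 0 = F (some 2) + (F (some 3) + F (some 4))) :
    (K4minus.addEdge ((0:Fin 4):K4minus.V) ((1:Fin 4):K4minus.V)).IsFlow
      (fun e => ((F e : ℝ) : AddCircle (5:ℝ))) := by
  intro v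
  rcases (show ∀ w : Fin 4, w = 0 ∨ w = 1 ∨ w = 2 ∨ w = 3 by decide) v with h|h|h|h <;>
    subst h <;>
    (rw [Finset.sum_filter, Finset.sum_filter]; erw [Fintype.sum_option, Fintype.sum_option, Fin.sum_univ_five, Fin.sum_univ_five]; simp only [Multigraph.addEdge, K4minus, Finset.sum_filter, Fintype.sum_option,
      Fin.sum_univ_succ]; simp)
  · show ((F none + (F (some 0) + F (some 2)) : ℝ) : AddCircle (5:ℝ)) = ((0:ℝ) : AddCircle (5:ℝ))
    exact congrArg _ (by linarith)
  · show ((F (some 1) + F (some 3) : ℝ) : AddCircle (5:ℝ)) = ((F none : ℝ) : AddCircle (5:ℝ))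
    exact congrArg _ (by linarith)
  · show ((F (some 4) : ℝ) : AddCircle (5:ℝ)) = ((F (some 0) + F (some 1) : ℝ) : AddCircle (5:ℝ))
    exact congrArg _ (by linarith)
  · rw [add_assoc]
    show ((0:ℝ) : AddCircle (5:ℝ)) = ((F (some 2) + (F (some 3) + F (some 4)) : ℝ) : AddCircle (5:ℝ))
    exact congrArg _ (by linarith)

lemma construct (t : AddCircle (5:ℝ)) (t₀ a b : ℝ) (ht : ((t₀:ℝ):AddCircle (5:ℝ)) = t)
    (ha : a ∈ Set.Ioo (-1:ℝ) 1) (hb : b ∈ Set.Ioo (-1:ℝ) 1)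
    (h2 : 5 - t₀ - a ∈ Set.Ioo (1:ℝ) 4) (h3 : t₀ - b ∈ Set.Ioo (1:ℝ) 4)
    (h4 : a + b ∈ Set.Ioo (1:ℝ) 4) :
    t ∈ CPcap 5 K4minus thickCap ((0:Fin 4):K4minus.V) ((1:Fin 4):K4minus.V) := by
  refine ⟨fun _ => 1,
    fun e => (((e.elim t₀ ![a, b, -t₀-a, t₀-b, a+b] : ℝ)) : AddCircle (5:ℝ)), ?_, ?_, ?_⟩
  · unfold Multigraph.IsFlowOn
    show Multigraph.IsFlow _ _
    simp only [Units.val_one, one_smul]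
    exact buildFlow _ (show t₀ + (a + (-t₀-a)) = 0 by ring)
      (show b + (t₀-b) = t₀ by ring) (show a+b = a + b by ring)
      (show (0:ℝ) = (-t₀-a) + ((t₀-b) + (a+b)) by ring)
  · intro e
    rcases (show ∀ i : Fin 5, i=0∨i=1∨i=2∨i=3∨i=4 by decide) e with h|h|h|h|h <;> subst h
    · show ((a:ℝ) : AddCircle (5:ℝ)) ∈ openArc 5 4 1
      rw [arc41]
      exact ⟨a+5, ⟨by linarith [ha.1], by linarith [ha.2]⟩, (coe5 _ _).mpr ⟨-1, by push_cast; ring⟩⟩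
    · show ((b:ℝ) : AddCircle (5:ℝ)) ∈ openArc 5 4 1
      rw [arc41]
      exact ⟨b+5, ⟨by linarith [hb.1], by linarith [hb.2]⟩, (coe5 _ _).mpr ⟨-1, by push_cast; ring⟩⟩
    · show ((-t₀-a:ℝ) : AddCircle (5:ℝ)) ∈ openArc 5 1 4
      rw [arc14]
      exact ⟨5-t₀-a, h2, (coe5 _ _).mpr ⟨-1, by push_cast; ring⟩⟩
    · show ((t₀-b:ℝ) : AddCircle (5:ℝ)) ∈ openArc 5 1 4
      rw [arc14]
      exact ⟨t₀-b, h3, rfl⟩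
    · show ((a+b:ℝ) : AddCircle (5:ℝ)) ∈ openArc 5 1 4
      rw [arc14]
      exact ⟨a+b, h4, rfl⟩
  · exact ht
/-- The open 5-capacity of the thick `(1,4)`-edge — obtained
from `K₄` by deleting the edge `uv` of a triangle `uvw` and giving capacity
`(4,1)` to the other two edges `uw, vw` of that triangle, and `(1,4)` to the
remaining edges — with terminals `u` and `v`, equals `(1,4)`. -/
theorem thick_edge_capacity :
    CPcap 5 K4minus thickCap ((0 : Fin 4) : K4minus.V) ((1 : Fin 4) : K4minus.V)
      = openArc 5 1 4 := by
  apply Set.eq_of_subset_of_subset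
  · rintro t ⟨σ, f, hflow, hcap, hnone⟩
    have hc0 := hcap ((0:Fin 5) : K4minus.E)
    have hc1 := hcap ((1:Fin 5) : K4minus.E)
    have hc2 := hcap ((2:Fin 5) : K4minus.E)
    have hc3 := hcap ((3:Fin 5) : K4minus.E)
    have hc4 := hcap ((4:Fin 5) : K4minus.E)
    rw [show thickCap ((0:Fin 5):K4minus.E) = openArc 5 4 1 from rfl, arc41] at hc0
    rw [show thickCap ((1:Fin 5):K4minus.E) = openArc 5 4 1 from rfl, arc41] at hc1
    rw [show thickCap ((2:Fin 5):K4minus.E) = openArc 5 1 4 from rfl, arc14] at hc2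
    rw [show thickCap ((3:Fin 5):K4minus.E) = openArc 5 1 4 from rfl, arc14] at hc3
    rw [show thickCap ((4:Fin 5):K4minus.E) = openArc 5 1 4 from rfl, arc14] at hc4
    obtain ⟨x0, hx0, he0⟩ := hc0
    obtain ⟨x1, hx1, he1⟩ := hc1
    obtain ⟨x2, hx2, he2⟩ := hc2
    obtain ⟨x3, hx3, he3⟩ := hc3
    obtain ⟨x4, hx4, he4⟩ := hc4
    obtain ⟨y0, hy0, hg0⟩ := sign_lift (σ (some ((0:Fin 5):K4minus.E))) _ hx0 he0 (Or.inr (by norm_num))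
    obtain ⟨y1, hy1, hg1⟩ := sign_lift (σ (some ((1:Fin 5):K4minus.E))) _ hx1 he1 (Or.inr (by norm_num))
    obtain ⟨y2, hy2, hg2⟩ := sign_lift (σ (some ((2:Fin 5):K4minus.E))) _ hx2 he2 (Or.inl (by norm_num))
    obtain ⟨y3, hy3, hg3⟩ := sign_lift (σ (some ((3:Fin 5):K4minus.E))) _ hx3 he3 (Or.inl (by norm_num))
    obtain ⟨y4, hy4, hg4⟩ := sign_lift (σ (some ((4:Fin 5):K4minus.E))) _ hx4 he4 (Or.inl (by norm_num))
    have hgflow : (K4minus.addEdge ((0:Fin 4):K4minus.V) ((1:Fin 4):K4minus.V)).IsFlow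
        (fun e => ((σ e : ℤ) • f e)) := hflow
    have h0 := hgflow ((0:Fin 4) : K4minus.V)
    have h1 := hgflow ((1:Fin 4) : K4minus.V)
    have h2 := hgflow ((2:Fin 4) : K4minus.V)
    rw [Finset.sum_filter, Finset.sum_filter] at h0 h1 h2
    erw [Fintype.sum_option, Fintype.sum_option, Fin.sum_univ_five, Fin.sum_univ_five] at h0 h1 h2
    simp only [Multigraph.addEdge, K4minus, Finset.sum_filter, Fintype.sum_option,
      Fin.sum_univ_succ] at h0 h1 h2
    simp at h0 h1 h2
    have h0' : (σ none : ℤ) • f none +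
        ((σ (some ((0:Fin 5):K4minus.E)) : ℤ) • f (some ((0:Fin 5):K4minus.E)) +
         (σ (some ((2:Fin 5):K4minus.E)) : ℤ) • f (some ((2:Fin 5):K4minus.E))) = 0 := h0
    have h1' : (σ (some ((1:Fin 5):K4minus.E)) : ℤ) • f (some ((1:Fin 5):K4minus.E)) +
        (σ (some ((3:Fin 5):K4minus.E)) : ℤ) • f (some ((3:Fin 5):K4minus.E)) =
        (σ none : ℤ) • f none := h1
    have h2' : (σ (some ((4:Fin 5):K4minus.E)) : ℤ) • f (some ((4:Fin 5):K4minus.E)) =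
        (σ (some ((0:Fin 5):K4minus.E)) : ℤ) • f (some ((0:Fin 5):K4minus.E)) +
        (σ (some ((1:Fin 5):K4minus.E)) : ℤ) • f (some ((1:Fin 5):K4minus.E)) := h2
    rw [← hg0, ← hg2] at h0'
    rw [← hg1, ← hg3] at h1'
    rw [← hg4, ← hg0, ← hg1] at h2'
    have hs : (σ none : ℤ) • f none = ((-(y0+y2) : ℝ) : AddCircle (5:ℝ)) := by
      rw [eq_neg_of_add_eq_zero_left h0']
      rfl
    have hm : ∃ m : ℤ, (-(y0+y2)) - (y1+y3) = 5*m := by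
      refine (coe5 _ _).mp ?_
      rw [← hs, ← h1']
      rfl
    obtain ⟨m, hm⟩ := hm
    have hm' : m = -3 := by
      obtain ⟨hy0a, hy0b⟩ := hy0
      obtain ⟨hy1a, hy1b⟩ := hy1
      obtain ⟨hy2a, hy2b⟩ := hy2
      obtain ⟨hy3a, hy3b⟩ := hy3
      have hlb : (-4:ℝ) < (m:ℝ) := by linarith
      have hub : (m:ℝ) < -2 := by linarith
      have hlb' : (-4:ℤ) < m := by exact_mod_cast hlb
      have hub' : m < -2 := by exact_mod_cast hub
      omega
    have hS : y0 + y1 + y2 + y3 = 15 := by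
      rw [hm'] at hm
      push_cast at hm
      linarith
    have hk : ∃ k : ℤ, y4 - (y0+y1) = 5*k := by
      refine (coe5 _ _).mp ?_
      rw [h2']
      rfl
    obtain ⟨k, hk⟩ := hk
    have hkc : k = -2 ∨ k = -1 := by
      obtain ⟨hy0a, hy0b⟩ := hy0
      obtain ⟨hy1a, hy1b⟩ := hy1
      obtain ⟨hy4a, hy4b⟩ := hy4
      have hlb : (-3:ℝ) < (k:ℝ) := by linarith
      have hub : (k:ℝ) < 0 := by linarith
      have hlb' : (-3:ℤ) < k := by exact_mod_cast hlb
      have hub' : k < 0 := by exact_mod_cast hub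
      omega
    have hkey : 6 < y0 + y2 ∧ y0 + y2 < 9 := by
      obtain ⟨hy0a, hy0b⟩ := hy0
      obtain ⟨hy1a, hy1b⟩ := hy1
      obtain ⟨hy2a, hy2b⟩ := hy2
      obtain ⟨hy3a, hy3b⟩ := hy3
      obtain ⟨hy4a, hy4b⟩ := hy4
      rcases hkc with h | h <;> rw [h] at hk <;> push_cast at hk <;>
        exact ⟨by linarith, by linarith⟩
    rw [arc14]
    rcases Int.units_eq_one_or (σ none) with hu | hu
    · refine ⟨10 - (y0+y2), ⟨by linarith [hkey.2], by linarith [hkey.1]⟩, ?_⟩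
      have e1 : ((10-(y0+y2):ℝ):AddCircle (5:ℝ)) = ((-(y0+y2):ℝ):AddCircle (5:ℝ)) :=
        (coe5 _ _).mpr ⟨-2, by push_cast; ring⟩
      show ((10-(y0+y2):ℝ):AddCircle (5:ℝ)) = t
      rw [e1, ← hs, hu, hnone]
      simp
    · refine ⟨(y0+y2) - 5, ⟨by linarith [hkey.1], by linarith [hkey.2]⟩, ?_⟩
      have e1 : (((y0+y2)-5:ℝ):AddCircle (5:ℝ)) = -((-(y0+y2):ℝ):AddCircle (5:ℝ)) := by
        rw [show ((-(y0+y2):ℝ):AddCircle (5:ℝ)) = -(((y0+y2):ℝ):AddCircle (5:ℝ)) from rfl,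
          neg_neg]
        exact (coe5 _ _).mpr ⟨1, by push_cast; ring⟩
      show (((y0+y2)-5:ℝ):AddCircle (5:ℝ)) = t
      rw [e1, ← hs, hu, hnone]
      simp
  · intro t ht
    rw [arc14] at ht
    obtain ⟨t₀, ⟨h1t, h4t⟩, hteq⟩ := ht
    rcases le_or_gt t₀ (5/2) with hc | hc
    · exact construct t t₀ (1 - (t₀-1)/4) ((t₀-1)/2) hteq
        ⟨by linarith, by linarith⟩ ⟨by linarith, by linarith⟩
        ⟨by linarith, by linarith⟩ ⟨by linarith, by linarith⟩ ⟨by linarith, by linarith⟩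
    · exact construct t t₀ ((4-t₀)/2) (1 - (4-t₀)/4) hteq
        ⟨by linarith, by linarith⟩ ⟨by linarith, by linarith⟩
        ⟨by linarith, by linarith⟩ ⟨by linarith, by linarith⟩ ⟨by linarith, by linarith⟩
end

section
/- Let C be a cycle consisting of simple edges in a graph G, and let T be a collection of graphic open 5-capacities (subsets of ℝ/5ℤ) such that the amplitude of the union ⋃_{A∈T} A is at most 3. Let G' be the capacitated graph obtained from G by assigning to each edge of C some capacity A ∈ T (not necessarily the same for all edges) and capacity (1,4) to every other edge. If φ_c(G) ≥ 5, then G' admits no sub-5-MCNZF; consequently, any graph G'' obtained from G by replacing each edge of C by an A-edge with A ∈ T satisfies φ_c(G'') ≥ 5. -/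
open Finset


open Finset

/-- Vertex embedding for edge replacement. -/
def erEmbed (G : Multigraph) (H : G.E → Multigraph) (a b : ∀ e, (H e).V) (e : G.E)
    (x : (H e).V) : G.V ⊕ Σ e : G.E, {x : (H e).V // x ≠ a e ∧ x ≠ b e} :=
  if h1 : x = a e then Sum.inl (G.src e)
  else if h2 : x = b e then Sum.inl (G.tgt e)
  else Sum.inr ⟨e, x, h1, h2⟩

/-- The graph obtained from `G` by replacing each edge `e` by the g-edge
`(H e)_{a e, b e}`, the terminal `a e` being glued onto `G.src e` and `b e`
onto `G.tgt e`. -/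
def edgeReplace (G : Multigraph) (H : G.E → Multigraph) (a b : ∀ e, (H e).V) : Multigraph where
  V := G.V ⊕ Σ e : G.E, {x : (H e).V // x ≠ a e ∧ x ≠ b e}
  E := Σ e : G.E, (H e).E
  src := fun ee => erEmbed G H a b ee.1 ((H ee.1).src ee.2)
  tgt := fun ee => erEmbed G H a b ee.1 ((H ee.1).tgt ee.2)

/-- `A` is a graphic subset of `ℝ/kℤ`: it is the open `k`-capacity of some
g-edge. -/
def Graphic (k : ℝ) (A : Set (AddCircle k)) : Prop :=
  ∃ (G : Multigraph) (u v : G.V), u ≠ v ∧ CP k G u v = A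


open Finset

lemma fract_neg35 : Int.fract ((-3)/5 : ℝ) = 2/5 := by
  have : ((-3)/5 : ℝ) = (2/5 : ℝ) + (-1 : ℤ) := by push_cast; ring
  rw [this, Int.fract_add_intCast, Int.fract_eq_self.2 (by norm_num)]

lemma openArc_three (a : ℝ) : openArc 5 a (a+3) = (fun t : ℝ => (t : AddCircle (5:ℝ))) '' Set.Ioo a (a+3) := by
  unfold openArc
  have h1 : (a - (a+3))/5 = ((-3)/5 : ℝ) := by ring
  rw [h1, fract_neg35]
  norm_num

lemma openArc14 : openArc 5 1 4 = (fun t : ℝ => (t : AddCircle (5:ℝ))) '' Set.Ioo 1 4 := by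
  have := openArc_three 1; norm_num at this ⊢; exact this

lemma neg_coe_AC (u : ℝ) : -((u : ℝ) : AddCircle (5:ℝ)) = ((5 - u : ℝ) : AddCircle (5:ℝ)) := by
  have h5 : ((5:ℝ) : AddCircle (5:ℝ)) = 0 := by
    rw [AddCircle.coe_eq_zero_iff]
    exact ⟨1, by norm_num⟩
  have h2 : ((5 - u : ℝ) : AddCircle (5:ℝ)) = ((5:ℝ) : AddCircle (5:ℝ)) - ((u:ℝ) : AddCircle (5:ℝ)) := by
    rw [← AddCircle.coe_sub]
  rw [h2, h5, zero_sub]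

lemma neg_mem_arc14 {x : AddCircle (5:ℝ)} (h : x ∈ openArc 5 1 4) : -x ∈ openArc 5 1 4 := by
  rw [openArc14] at h ⊢
  obtain ⟨u, hu, rfl⟩ := h
  exact ⟨5 - u, ⟨by linarith [hu.2], by linarith [hu.1]⟩, (neg_coe_AC u).symm⟩

open Finset

variable {M : Type*} [AddCommGroup M]

/-- Excess of `w` at `v` w.r.t. the reference orientation. -/
def exF (G : Multigraph) (w : G.E → M) (v : G.V) : M :=
  (∑ e ∈ Finset.univ.filter (fun e => G.src e = v), w e) -
  (∑ e ∈ Finset.univ.filter (fun e => G.tgt e = v), w e)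

lemma isFlow_iff_exF (G : Multigraph) (w : G.E → M) :
    G.IsFlow w ↔ ∀ v, exF G w v = 0 := by
  unfold Multigraph.IsFlow exF
  constructor
  · intro h v; rw [h v, sub_self]
  · intro h v; have := h v; rwa [sub_eq_zero] at this

lemma exF_add (G : Multigraph) (w w' : G.E → M) (v : G.V) :
    exF G (fun e => w e + w' e) v = exF G w v + exF G w' v := by
  unfold exF; rw [Finset.sum_add_distrib, Finset.sum_add_distrib]; abel

lemma sum_filter_eq_sum_ite (G : Multigraph) (w : G.E → M) (q : G.E → G.V) (v : G.V) :
    ∑ e ∈ Finset.univ.filter (fun e => q e = v), w e = ∑ e, if q e = v then w e else 0 :=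
  Finset.sum_filter _ _

lemma exF_sum_eq_zero (G : Multigraph) (w : G.E → M) : ∑ v, exF G w v = 0 := by
  unfold exF
  rw [Finset.sum_sub_distrib]
  have h : ∀ q : G.E → G.V, ∑ v, ∑ e ∈ Finset.univ.filter (fun e => q e = v), w e = ∑ e, w e := by
    intro q
    have : ∀ v, ∑ e ∈ Finset.univ.filter (fun e => q e = v), w e
        = ∑ e, if q e = v then w e else 0 := fun v => Finset.sum_filter _ _
    simp_rw [this]
    rw [Finset.sum_comm]
    apply Finset.sum_congr rfl
    intro e _
    rw [Finset.sum_ite_eq Finset.univ (q e) (fun _ => w e)]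
    simp
  rw [h G.src, h G.tgt, sub_self]

/-- Excess of a single-edge supported function. -/
lemma exF_single (G : Multigraph) (e : G.E) (c : M) (v : G.V) :
    exF G (fun e' => if e' = e then c else 0) v =
      (if G.src e = v then c else 0) - (if G.tgt e = v then c else 0) := by
  unfold exF
  congr 1
  · rw [Finset.sum_filter]
    rw [Finset.sum_eq_single e]
    · simp
    · intro e' _ h; simp [h]
    · simp
  · rw [Finset.sum_filter]
    rw [Finset.sum_eq_single e]
    · simp
    · intro e' _ h; simp [h]
    · simp

open Finset

lemma isFlow_neg {M : Type*} [AddCommGroup M] (G : Multigraph) (w : G.E → M)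
    (h : G.IsFlow w) : G.IsFlow (fun e => -(w e)) := by
  rw [isFlow_iff_exF] at h ⊢
  intro v
  have : exF G (fun e => -(w e)) v = - exF G w v := by
    unfold exF; rw [Finset.sum_neg_distrib, Finset.sum_neg_distrib]; abel
  rw [this, h v, neg_zero]

lemma CP_neg {G : Multigraph} {u v : G.V} {t : AddCircle (5:ℝ)}
    (h : t ∈ CP 5 G u v) : -t ∈ CP 5 G u v := by
  obtain ⟨σ, f, hf, hc, hn⟩ := h
  refine ⟨σ, fun o => -(f o), ?_, ?_, by simp only []; rw [hn]⟩
  · have := isFlow_neg _ _ hf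
    unfold Multigraph.IsFlowOn at this ⊢
    convert this using 2 with o
    simp [smul_neg]
  · intro e
    have h14 : (5:ℝ) - 1 = 4 := by norm_num
    have := hc e
    simp only [h14] at this ⊢
    exact neg_mem_arc14 this

lemma graphic_neg_mem {A : Set (AddCircle (5:ℝ))} (h : Graphic 5 A)
    {x : AddCircle (5:ℝ)} (hx : x ∈ A) : -x ∈ A := by
  obtain ⟨G, u, v, _, rfl⟩ := h
  exact CP_neg hx

open Finset

lemma coe_five : (((5:ℝ)) : AddCircle (5:ℝ)) = 0 := by
  rw [AddCircle.coe_eq_zero_iff]; exact ⟨1, by norm_num⟩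

lemma exF_hom {M N : Type*} [AddCommGroup M] [AddCommGroup N] (φ : M →+ N)
    (G : Multigraph) (w : G.E → M) (v : G.V) :
    exF G (fun e => φ (w e)) v = φ (exF G w v) := by
  unfold exF; rw [map_sub, map_sum, map_sum]

lemma isFlow_smul (G : Multigraph) (w : G.E → ℝ) (c : ℝ) (h : G.IsFlow w) :
    G.IsFlow (fun e => c * w e) := by
  intro v; rw [← Finset.mul_sum, ← Finset.mul_sum, h v]

lemma sum_pair_split (G : Multigraph) (f g : G.V → ℝ) (v v' : G.V) (hne : v ≠ v')
    (hoff : ∀ u, u ≠ v → u ≠ v' → f u = g u) :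
    (∑ u, f u) - (∑ u, g u) = (f v + f v') - (g v + g v') := by
  classical
  have hv' : v' ∈ (univ : Finset G.V).erase v := Finset.mem_erase.2 ⟨Ne.symm hne, mem_univ _⟩
  have h1 : ∀ (h : G.V → ℝ), ∑ u, h u = h v + (h v' + ∑ u ∈ ((univ : Finset G.V).erase v).erase v', h u) := by
    intro h
    rw [Finset.add_sum_erase _ h hv', Finset.add_sum_erase _ h (mem_univ v)]
  rw [h1 f, h1 g]
  have h2 : ∑ u ∈ ((univ : Finset G.V).erase v).erase v', f u
      = ∑ u ∈ ((univ : Finset G.V).erase v).erase v', g u := by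
    apply Finset.sum_congr rfl
    intro u hu
    have hu2 := Finset.mem_erase.1 hu
    have hu3 := Finset.mem_erase.1 hu2.2
    exact hoff u hu3.1 hu2.1
  rw [h2]; ring

namespace Lift

variable (G : Multigraph) (σ : G.E → ℤˣ) (x : G.E → ℝ)

noncomputable def Y (s : G.E → Bool) (e : G.E) : ℝ :=
  ((σ e : ℤ) : ℝ) * (x e - if s e then 5 else 0)

noncomputable def ex (s : G.E → Bool) (v : G.V) : ℝ := exF G (Y G σ x s) v

noncomputable def Φ (s : G.E → Bool) : ℝ := ∑ v, |ex G σ x s v|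

lemma sigma_cases (e : G.E) : ((σ e : ℤ) : ℝ) = 1 ∨ ((σ e : ℤ) : ℝ) = -1 := by
  rcases Int.units_eq_one_or (σ e) with h | h <;> rw [h] <;> norm_num

lemma Y_cases (s : G.E → Bool) (e : G.E) :
    Y G σ x s e = x e ∨ Y G σ x s e = -(x e) ∨ Y G σ x s e = x e - 5 ∨ Y G σ x s e = 5 - x e := by
  cases hs : s e <;> rcases sigma_cases G σ e with h | h <;>
    simp [Y, hs, h] <;> ring_nf <;> tauto

variable (hx : ∀ e, x e ∈ Set.Ioo (1:ℝ) 4)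
include hx

lemma Y_sign (s : G.E → Bool) (e : G.E) :
    (1 < Y G σ x s e ∧ Y G σ x s e < 4) ∨ (-4 < Y G σ x s e ∧ Y G σ x s e < -1) := by
  obtain ⟨h1, h2⟩ := hx e
  rcases Y_cases G σ x s e with h | h | h | h <;> rw [h]
  · left; exact ⟨h1, h2⟩
  · right; constructor <;> linarith
  · right; constructor <;> linarith
  · left; constructor <;> linarith

lemma Y_abs (s : G.E → Bool) (e : G.E) :
    |Y G σ x s e| = x e ∨ |Y G σ x s e| = 5 - x e := by
  obtain ⟨h1, h2⟩ := hx e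
  rcases Y_cases G σ x s e with h | h | h | h <;> rw [h]
  · left; exact abs_of_pos (by linarith)
  · left; rw [abs_neg]; exact abs_of_pos (by linarith)
  · right; rw [abs_of_neg (by linarith)]; ring
  · right; exact abs_of_pos (by linarith)

lemma Y_update_self (s : G.E → Bool) (e : G.E) :
    Y G σ x (Function.update s e (!s e)) e
      = Y G σ x s e - (if 0 < Y G σ x s e then (5:ℝ) else -5) := by
  obtain ⟨h1, h2⟩ := hx e
  rcases Bool.dichotomy (s e) with hs | hs
  · rcases sigma_cases G σ e with h | h
    · have e1 : Y G σ x s e = x e := by simp [Y, hs, h]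
      have e2 : Y G σ x (Function.update s e (!s e)) e = x e - 5 := by
        simp [Y, hs, h]
      rw [e1, e2, if_pos (by linarith : (0:ℝ) < x e)]
    · have e1 : Y G σ x s e = -(x e) := by simp [Y, hs, h]
      have e2 : Y G σ x (Function.update s e (!s e)) e = 5 - x e := by
        simp [Y, hs, h] <;> ring
      rw [e1, e2, if_neg (by linarith : ¬ (0:ℝ) < -(x e))]; ring
  · rcases sigma_cases G σ e with h | h
    · have e1 : Y G σ x s e = x e - 5 := by simp [Y, hs, h]
      have e2 : Y G σ x (Function.update s e (!s e)) e = x e := by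
        simp [Y, hs, h]
      rw [e1, e2, if_neg (by linarith : ¬ (0:ℝ) < x e - 5)]; ring
    · have e1 : Y G σ x s e = 5 - x e := by simp [Y, hs, h] <;> ring
      have e2 : Y G σ x (Function.update s e (!s e)) e = -(x e) := by
        simp [Y, hs, h]
      rw [e1, e2, if_pos (by linarith : (0:ℝ) < 5 - x e)]; ring

omit hx in
lemma Y_update_ne (s : G.E → Bool) (e e' : G.E) (hne : e' ≠ e) :
    Y G σ x (Function.update s e (!s e)) e' = Y G σ x s e' := by
  simp [Y, Function.update_of_ne hne]

lemma ex_update (s : G.E → Bool) (e : G.E) (v : G.V) :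
    ex G σ x (Function.update s e (!s e)) v
      = ex G σ x s v - ((if G.src e = v then (if 0 < Y G σ x s e then (5:ℝ) else -5) else 0)
        - (if G.tgt e = v then (if 0 < Y G σ x s e then (5:ℝ) else -5) else 0)) := by
  classical
  set c := if 0 < Y G σ x s e then (5:ℝ) else -5 with hc
  have hptw : ∀ e', Y G σ x (Function.update s e (!s e)) e'
      = Y G σ x s e' + (if e' = e then -c else 0) := by
    intro e'
    by_cases he : e' = e
    · subst he; rw [Y_update_self G σ x hx, if_pos rfl]; ring
    · rw [Y_update_ne G σ x s e e' he, if_neg he, add_zero]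
  unfold ex
  have : exF G (Y G σ x (Function.update s e (!s e))) v
      = exF G (fun e' => Y G σ x s e' + (if e' = e then -c else 0)) v := by
    congr 1; funext e'; exact hptw e'
  rw [this, exF_add, exF_single]
  split_ifs <;> ring

end Lift

open Finset

namespace Lift

variable (G : Multigraph) (σ : G.E → ℤˣ) (x : G.E → ℝ)

def RStep (s : G.E → Bool) (v w : G.V) (e : G.E) : Prop :=
  (G.src e = v ∧ G.tgt e = w ∧ 0 < Y G σ x s e) ∨
  (G.src e = w ∧ G.tgt e = v ∧ Y G σ x s e < 0)

def Walk (s : G.E → Bool) : G.V → List G.E → G.V → Prop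
  | v, [], w => v = w
  | v, e :: l, w => ∃ v', RStep G σ x s v v' e ∧ Walk s v' l w

lemma RStep_unique {s : G.E → Bool} {v w v' w' : G.V} {e : G.E}
    (h1 : RStep G σ x s v w e) (h2 : RStep G σ x s v' w' e) : v = v' ∧ w = w' := by
  rcases h1 with ⟨a1, b1, c1⟩ | ⟨a1, b1, c1⟩ <;> rcases h2 with ⟨a2, b2, c2⟩ | ⟨a2, b2, c2⟩
  · exact ⟨a1 ▸ a2.symm ▸ rfl, b1 ▸ b2.symm ▸ rfl⟩
  · linarith
  · linarith
  · exact ⟨b1 ▸ b2.symm ▸ rfl, a1 ▸ a2.symm ▸ rfl⟩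

lemma Walk_append (s : G.E → Bool) (l₁ l₂ : List G.E) (v w : G.V) :
    Walk G σ x s v (l₁ ++ l₂) w ↔ ∃ u, Walk G σ x s v l₁ u ∧ Walk G σ x s u l₂ w := by
  induction l₁ generalizing v with
  | nil =>
    simp only [List.nil_append]
    constructor
    · intro h; exact ⟨v, rfl, h⟩
    · rintro ⟨u, rfl, h⟩; exact h
  | cons e t ih =>
    simp only [List.cons_append]
    constructor
    · rintro ⟨v', hR, hW⟩
      obtain ⟨u, h1, h2⟩ := (ih v').1 hW
      exact ⟨u, ⟨v', hR, h1⟩, h2⟩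
    · rintro ⟨u, ⟨v', hR, h1⟩, h2⟩
      exact ⟨v', hR, (ih v').2 ⟨u, h1, h2⟩⟩

lemma Walk_congr {s s' : G.E → Bool} (l : List G.E) (v w : G.V)
    (hY : ∀ e ∈ l, Y G σ x s' e = Y G σ x s e)
    (h : Walk G σ x s v l w) : Walk G σ x s' v l w := by
  induction l generalizing v with
  | nil => exact h
  | cons e t ih =>
    obtain ⟨v', hR, hW⟩ := h
    refine ⟨v', ?_, ih v' (fun e' he' => hY e' (List.mem_cons_of_mem _ he')) hW⟩
    have hYe := hY e List.mem_cons_self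
    unfold RStep at hR ⊢
    rw [hYe]
    exact hR

lemma Walk_nodup {s : G.E → Bool} (l : List G.E) (v w : G.V)
    (h : Walk G σ x s v l w) : ∃ l', l'.Nodup ∧ Walk G σ x s v l' w := by
  induction l generalizing v with
  | nil => exact ⟨[], List.nodup_nil, h⟩
  | cons e t ih =>
    obtain ⟨v', hR, hW⟩ := h
    obtain ⟨t', hnd, hW'⟩ := ih v' hW
    by_cases he : e ∈ t'
    · obtain ⟨t₁, t₂, rfl⟩ := List.append_of_mem he
      obtain ⟨u, h1, h2⟩ := (Walk_append G σ x s t₁ (e :: t₂) v' w).1 hW'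
      obtain ⟨u', hR', h3⟩ := h2
      obtain ⟨hu, hu'⟩ := RStep_unique G σ x hR' hR
      have hnd2 : (e :: t₂).Nodup := (List.nodup_append.1 hnd).2.1
      refine ⟨e :: t₂, hnd2, v', hR, ?_⟩
      exact hu' ▸ h3
    · exact ⟨e :: t', List.nodup_cons.2 ⟨he, hnd⟩, v', hR, hW'⟩

end Lift

open Finset

namespace Lift

variable (G : Multigraph) (σ : G.E → ℤˣ) (x : G.E → ℝ)

variable (hx : ∀ e, x e ∈ Set.Ioo (1:ℝ) 4)
variable (hflow : G.IsFlow (fun e => (σ e : ℤ) • ((x e : ℝ) : AddCircle (5:ℝ))))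

include hflow in
lemma ex_div (s : G.E → Bool) (v : G.V) : ∃ n : ℤ, ex G σ x s v = 5 * (n : ℝ) := by
  set φ : ℝ →+ AddCircle (5:ℝ) := QuotientAddGroup.mk' (AddSubgroup.zmultiples (5:ℝ)) with hφ
  have hφ_eq : ∀ y : ℝ, φ y = ((y : ℝ) : AddCircle (5:ℝ)) := fun y => rfl
  have hcomp : ∀ e, φ (Y G σ x s e) = (σ e : ℤ) • ((x e : ℝ) : AddCircle (5:ℝ)) := by
    intro e
    have h1 : Y G σ x s e = (σ e : ℤ) • (x e - if s e then (5:ℝ) else 0) := by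
      unfold Y; rw [zsmul_eq_mul]
    rw [h1, map_zsmul, map_sub]
    have h2 : φ (if s e then (5:ℝ) else 0) = 0 := by
      split_ifs
      · rw [hφ_eq]; exact coe_five
      · exact map_zero φ
    rw [h2, sub_zero, hφ_eq]
  have hzero : φ (ex G σ x s v) = 0 := by
    unfold ex
    rw [← exF_hom φ G (Y G σ x s) v]
    have : (fun e => φ (Y G σ x s e)) = fun e => (σ e : ℤ) • ((x e : ℝ) : AddCircle (5:ℝ)) := by
      funext e; exact hcomp e
    rw [this]
    exact ((isFlow_iff_exF G _).1 hflow) v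
  rw [hφ_eq] at hzero
  obtain ⟨n, hn⟩ := (AddCircle.coe_eq_zero_iff _).1 hzero
  exact ⟨n, by rw [← hn, zsmul_eq_mul]; ring⟩

include hx hflow in
lemma dec : ∀ (l : List G.E), l.Nodup → ∀ (s : G.E → Bool) (v w : G.V),
    Walk G σ x s v l w → 0 < ex G σ x s v → ex G σ x s w < 0 →
    ∃ s', Φ G σ x s' < Φ G σ x s := by
  intro l
  induction l with
  | nil =>
    intro _ s v w hW hv hw
    cases hW
    linarith
  | cons e t ih =>
    intro hnd s v w hW hv hw
    obtain ⟨henotin, hndt⟩ := List.nodup_cons.1 hnd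
    obtain ⟨v', hR, hWt⟩ := hW
    by_cases hvv' : v = v'
    · exact ih hndt s v' w hWt (hvv' ▸ hv) hw
    -- flip edge e
    · set s' := Function.update s e (!s e) with hs'
      have hYne : ∀ e' ∈ t, Y G σ x s' e' = Y G σ x s e' :=
        fun e' he' => Y_update_ne G σ x s e e' (fun h => henotin (h ▸ he'))
      have hWt' : Walk G σ x s' v' t w := Walk_congr G σ x t v' w hYne hWt
      -- effect on ex
      have hexv : ex G σ x s' v = ex G σ x s v - 5 := by
        rw [hs']
        rcases hR with ⟨ha, hb, hc⟩ | ⟨ha, hb, hc⟩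
        · rw [ex_update G σ x hx, if_pos hc, if_pos ha,
            if_neg (by rw [hb]; exact Ne.symm hvv')]
          ring
        · rw [ex_update G σ x hx, if_neg (not_lt.2 hc.le),
            if_neg (by rw [ha]; exact Ne.symm hvv'), if_pos hb]
          ring
      have hexv' : ex G σ x s' v' = ex G σ x s v' + 5 := by
        rw [hs']
        rcases hR with ⟨ha, hb, hc⟩ | ⟨ha, hb, hc⟩
        · rw [ex_update G σ x hx, if_pos hc, if_pos hb,
            if_neg (by rw [ha]; exact hvv')]
          ring
        · rw [ex_update G σ x hx, if_neg (not_lt.2 hc.le), if_pos ha,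
            if_neg (by rw [hb]; exact hvv')]
          ring
      have hexoff : ∀ u, u ≠ v → u ≠ v' → ex G σ x s' u = ex G σ x s u := by
        intro u hu hu'
        rw [hs']
        rcases hR with ⟨ha, hb, hc⟩ | ⟨ha, hb, hc⟩
        · rw [ex_update G σ x hx, if_pos hc,
            if_neg (by rw [ha]; exact fun h => hu h.symm),
            if_neg (by rw [hb]; exact fun h => hu' h.symm)]
          ring
        · rw [ex_update G σ x hx, if_neg (not_lt.2 hc.le),
            if_neg (by rw [ha]; exact fun h => hu' h.symm),
            if_neg (by rw [hb]; exact fun h => hu h.symm)]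
          ring
      -- divisibility facts
      obtain ⟨n, hn⟩ := ex_div G σ x hflow s v
      have hn1 : (1:ℤ) ≤ n := by
        have : (0:ℝ) < 5 * (n:ℝ) := hn ▸ hv
        have h0 : (0:ℤ) < n := by exact_mod_cast (by linarith : (0:ℝ) < (n:ℝ))
        omega
      have hv5 : (5:ℝ) ≤ ex G σ x s v := by
        rw [hn]
        have : (1:ℝ) ≤ (n:ℝ) := by exact_mod_cast hn1
        linarith
      have habs_v : |ex G σ x s' v| = |ex G σ x s v| - 5 := by
        rw [hexv, abs_of_nonneg (by linarith), abs_of_nonneg (by linarith)]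
      have hΦdiff : Φ G σ x s' - Φ G σ x s
          = (|ex G σ x s' v| + |ex G σ x s' v'|) - (|ex G σ x s v| + |ex G σ x s v'|) := by
        unfold Φ
        exact sum_pair_split G _ _ v v' hvv' (fun u hu hu' => by rw [hexoff u hu hu'])
      by_cases hneg : ex G σ x s v' < 0
      · -- strict decrease
        obtain ⟨n', hn'⟩ := ex_div G σ x hflow s v'
        have hn'1 : n' ≤ -1 := by
          have : 5 * (n':ℝ) < 0 := hn' ▸ hneg
          have h0 : n' < 0 := by exact_mod_cast (by linarith : (n':ℝ) < (0:ℝ))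
          omega
        have hv'5 : ex G σ x s v' ≤ -5 := by
          rw [hn']
          have : (n':ℝ) ≤ -1 := by exact_mod_cast hn'1
          linarith
        have habs_v' : |ex G σ x s' v'| = |ex G σ x s v'| - 5 := by
          rw [hexv', abs_of_nonpos (by linarith), abs_of_nonpos (by linarith)]
          ring
        refine ⟨s', ?_⟩
        rw [← sub_neg, hΦdiff, habs_v, habs_v']
        linarith
      · push_neg at hneg
        have habs_v' : |ex G σ x s' v'| = |ex G σ x s v'| + 5 := by
          rw [hexv', abs_of_nonneg (by linarith), abs_of_nonneg hneg]
        have hΦeq : Φ G σ x s' = Φ G σ x s := by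
          have := hΦdiff
          rw [habs_v, habs_v'] at this
          linarith
        have hwv : w ≠ v := fun h => by rw [h] at hw; linarith
        have hwv' : w ≠ v' := fun h => by rw [h] at hw; linarith
        have hv'pos : 0 < ex G σ x s' v' := by rw [hexv']; linarith
        have hwneg : ex G σ x s' w < 0 := by rw [hexoff w hwv hwv']; exact hw
        obtain ⟨s'', hs''⟩ := ih hndt s' v' w hWt' hv'pos hwneg
        exact ⟨s'', by rw [hΦeq] at hs''; exact hs''⟩

end Lift

open Finset

namespace Lift

theorem modflow_lift (G : Multigraph) [hne : Nonempty G.E] (σ : G.E → ℤˣ) (x : G.E → ℝ)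
    (hx : ∀ e, x e ∈ Set.Ioo (1:ℝ) 4)
    (hflow : G.IsFlow (fun e => (σ e : ℤ) • ((x e : ℝ) : AddCircle (5:ℝ)))) :
    ∃ r : ℝ, r < 5 ∧ G.HasCNZF r := by
  classical
  obtain ⟨s₀, _, hmin⟩ := Finset.exists_min_image (univ : Finset (G.E → Bool)) (Φ G σ x)
    ⟨fun _ => false, mem_univ _⟩
  -- The minimiser is a genuine flow.
  have hzero : ∀ v, ex G σ x s₀ v = 0 := by
    by_contra hcon
    push_neg at hcon
    obtain ⟨v₁, hv₁⟩ := hcon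
    -- find a vertex of positive excess
    have hsum : ∑ v, ex G σ x s₀ v = 0 := exF_sum_eq_zero G _
    have hexpos : ∃ v₀, 0 < ex G σ x s₀ v₀ := by
      by_contra hnp
      push_neg at hnp
      have hlt : ex G σ x s₀ v₁ < 0 := lt_of_le_of_ne (hnp v₁) hv₁
      have : ∑ v, ex G σ x s₀ v < ∑ v : G.V, (0:ℝ) :=
        Finset.sum_lt_sum (fun i _ => hnp i) ⟨v₁, mem_univ _, hlt⟩
      rw [Finset.sum_const_zero] at this
      linarith
    obtain ⟨v₀, hv₀⟩ := hexpos
    -- reachable set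
    set S : Finset G.V := univ.filter (fun u => ∃ l, Walk G σ x s₀ v₀ l u) with hS
    have hv₀S : v₀ ∈ S := by
      rw [hS, mem_filter]
      exact ⟨mem_univ _, [], rfl⟩
    have hclosed : ∀ u u' e, u ∈ S → RStep G σ x s₀ u u' e → u' ∈ S := by
      intro u u' e huS hR
      rw [hS, mem_filter] at huS ⊢
      obtain ⟨-, l, hl⟩ := huS
      exact ⟨mem_univ _, l ++ [e], (Walk_append G σ x s₀ l [e] v₀ u').2
        ⟨u, hl, u', hR, rfl⟩⟩
    -- cut computation
    have hcut : ∑ u ∈ S, ex G σ x s₀ u ≤ 0 := by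
      have hrw : ∑ u ∈ S, ex G σ x s₀ u
          = ∑ e, ((if G.src e ∈ S then Y G σ x s₀ e else 0)
            - (if G.tgt e ∈ S then Y G σ x s₀ e else 0)) := by
        unfold ex exF
        rw [Finset.sum_sub_distrib, Finset.sum_sub_distrib]
        congr 1
        · have h1 : ∀ u, ∑ e ∈ univ.filter (fun e => G.src e = u), Y G σ x s₀ e
              = ∑ e, if G.src e = u then Y G σ x s₀ e else 0 :=
            fun u => Finset.sum_filter _ _
          simp_rw [h1]
          rw [Finset.sum_comm]
          apply Finset.sum_congr rfl
          intro e _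
          rw [Finset.sum_ite_eq S (G.src e) (fun _ => Y G σ x s₀ e)]
        · have h1 : ∀ u, ∑ e ∈ univ.filter (fun e => G.tgt e = u), Y G σ x s₀ e
              = ∑ e, if G.tgt e = u then Y G σ x s₀ e else 0 :=
            fun u => Finset.sum_filter _ _
          simp_rw [h1]
          rw [Finset.sum_comm]
          apply Finset.sum_congr rfl
          intro e _
          rw [Finset.sum_ite_eq S (G.tgt e) (fun _ => Y G σ x s₀ e)]
      rw [hrw]
      apply Finset.sum_nonpos
      intro e _
      rcases Y_sign G σ x hx s₀ e with ⟨h1, h2⟩ | ⟨h1, h2⟩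
      · by_cases hsrc : G.src e ∈ S
        · have htgt : G.tgt e ∈ S :=
            hclosed _ _ e hsrc (Or.inl ⟨rfl, rfl, by linarith⟩)
          rw [if_pos hsrc, if_pos htgt]; ring_nf; rfl
        · rw [if_neg hsrc]
          split_ifs <;> linarith
      · by_cases htgt : G.tgt e ∈ S
        · have hsrc : G.src e ∈ S :=
            hclosed _ _ e htgt (Or.inr ⟨rfl, rfl, by linarith⟩)
          rw [if_pos hsrc, if_pos htgt]; ring_nf; rfl
        · rw [if_neg htgt]
          split_ifs <;> linarith
    -- find a reachable vertex of negative excess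
    have hneg : ∃ w ∈ S, ex G σ x s₀ w < 0 := by
      by_contra hnn
      push_neg at hnn
      have : ex G σ x s₀ v₀ ≤ ∑ u ∈ S, ex G σ x s₀ u :=
        Finset.single_le_sum (fun u hu => hnn u hu) hv₀S
      linarith
    obtain ⟨w, hwS, hw⟩ := hneg
    rw [hS, mem_filter] at hwS
    obtain ⟨-, l, hl⟩ := hwS
    obtain ⟨l', hnd, hl'⟩ := Walk_nodup G σ x l v₀ w hl
    obtain ⟨s', hs'⟩ := dec G σ x hx hflow l' hnd s₀ v₀ w hl' hv₀ hw
    exact absurd (hmin s' (mem_univ _)) (not_le.2 hs')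
  have hfl : G.IsFlow (Y G σ x s₀) := (isFlow_iff_exF G _).2 hzero
  -- margin
  set img : Finset ℝ := univ.image (fun e => min (x e - 1) (4 - x e)) with himg
  have himgne : img.Nonempty := ⟨_, Finset.mem_image_of_mem _ (mem_univ (Classical.arbitrary G.E))⟩
  set m : ℝ := img.min' himgne with hm
  have hmle : ∀ e, m ≤ x e - 1 ∧ m ≤ 4 - x e := by
    intro e
    have h1 : m ≤ min (x e - 1) (4 - x e) :=
      Finset.min'_le _ _ (Finset.mem_image_of_mem _ (mem_univ e))
    exact ⟨le_trans h1 (min_le_left _ _), le_trans h1 (min_le_right _ _)⟩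
  have hmpos : 0 < m := by
    obtain ⟨e, -, he⟩ := Finset.mem_image.1 (img.min'_mem himgne)
    rw [hm, ← he]
    obtain ⟨h1, h2⟩ := hx e
    exact lt_min (by linarith) (by linarith)
  refine ⟨5 / (1 + m), ?_, ?_⟩
  · rw [div_lt_iff₀ (by linarith)]
    nlinarith
  · -- build the CNZF
    refine ⟨fun e => if 0 < Y G σ x s₀ e then 1 else -1,
      fun e => |Y G σ x s₀ e| / (1 + m), ?_, ?_⟩
    · have hptw : ∀ e, ((if 0 < Y G σ x s₀ e then (1:ℤˣ) else -1 : ℤˣ) : ℤ)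
          • (|Y G σ x s₀ e| / (1 + m)) = (1 / (1+m)) * Y G σ x s₀ e := by
        intro e
        split_ifs with h
        · rw [show ((1:ℤˣ):ℤ) = 1 from rfl, one_smul, abs_of_pos h]; ring
        · push_neg at h
          rcases Y_sign G σ x hx s₀ e with ⟨h1, h2⟩ | ⟨h1, h2⟩
          · linarith
          · rw [show ((-1:ℤˣ):ℤ) = -1 from rfl, neg_one_zsmul, abs_of_neg (by linarith)]
            ring
      unfold Multigraph.IsFlowOn
      have : (fun e => ((if 0 < Y G σ x s₀ e then (1:ℤˣ) else -1 : ℤˣ) : ℤ)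
          • (|Y G σ x s₀ e| / (1 + m))) = fun e => (1 / (1+m)) * Y G σ x s₀ e := by
        funext e; exact hptw e
      rw [this]
      exact isFlow_smul G _ _ hfl
    · intro e
      obtain ⟨hme1, hme2⟩ := hmle e
      have habs : |Y G σ x s₀ e| = x e ∨ |Y G σ x s₀ e| = 5 - x e := Y_abs G σ x hx s₀ e
      have hb1 : 1 + m ≤ |Y G σ x s₀ e| := by
        rcases habs with h | h <;> rw [h] <;> linarith
      have hb2 : |Y G σ x s₀ e| ≤ 4 - m := by
        rcases habs with h | h <;> rw [h] <;> linarith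
      constructor
      · rw [le_div_iff₀ (by linarith)]; linarith
      · rw [div_le_iff₀ (by linarith)]
        have : 5 / (1 + m) - 1 = (4 - m) / (1 + m) := by
          field_simp
          ring
        rw [this, div_mul_cancel₀ _ (by linarith : (1:ℝ) + m ≠ 0)]
        exact hb2

end Lift

open Finset

lemma capflow_arc14_lt5 (G : Multigraph) [hne : Nonempty G.E]
    (σ : G.E → ℤˣ) (f : G.E → AddCircle (5:ℝ))
    (hfl : G.IsFlowOn σ f) (hcap : ∀ e, f e ∈ openArc 5 1 4) :
    ∃ r : ℝ, r < 5 ∧ G.HasCNZF r := by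
  have h : ∀ e, ∃ u : ℝ, u ∈ Set.Ioo (1:ℝ) 4 ∧ ((u:ℝ) : AddCircle (5:ℝ)) = f e := by
    intro e
    have := hcap e
    rw [openArc14] at this
    obtain ⟨u, hu, he⟩ := this
    exact ⟨u, hu, he⟩
  choose x hx hcoe using h
  apply Lift.modflow_lift G σ x hx
  have heq : (fun e => (σ e : ℤ) • ((x e : ℝ) : AddCircle (5:ℝ)))
      = fun e => (σ e : ℤ) • f e := by
    funext e; rw [hcoe e]
  rw [show (fun e => (σ e : ℤ) • ((x e : ℝ) : AddCircle (5:ℝ)))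
      = fun e => (σ e : ℤ) • f e from heq]
  exact hfl

lemma no_arc14_flow (G : Multigraph) [hne : Nonempty G.E]
    (hG : ((5 : ℝ) : EReal) ≤ circFlowNumber G) :
    ¬ ∃ (σ : G.E → ℤˣ) (f : G.E → AddCircle (5:ℝ)),
        G.IsFlowOn σ f ∧ ∀ e, f e ∈ openArc 5 1 4 := by
  rintro ⟨σ, f, hfl, hcap⟩
  obtain ⟨r, hr5, hC⟩ := capflow_arc14_lt5 G σ f hfl hcap
  have hle : circFlowNumber G ≤ ((r : ℝ) : EReal) := sInf_le ⟨r, rfl, hC⟩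
  have hlt : ((r : ℝ) : EReal) < ((5:ℝ) : EReal) := by exact_mod_cast hr5
  exact absurd (le_trans hG hle) (not_le.2 hlt)

lemma shift_mem_arc14 (z : ℤ) {y : AddCircle (5:ℝ)}
    (hy : y ∈ openArc 5 (z:ℝ) ((z:ℝ)+3)) :
    y + (((1 - (z:ℝ)) : ℝ) : AddCircle (5:ℝ)) ∈ openArc 5 1 4 := by
  rw [openArc_three (z:ℝ)] at hy
  rw [openArc14]
  obtain ⟨u, hu, rfl⟩ := hy
  refine ⟨u + (1 - (z:ℝ)), ⟨by linarith [hu.1], by linarith [hu.2]⟩, ?_⟩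
  rw [← AddCircle.coe_add]

open Finset

theorem part1 (G : Multigraph)
    (m : ℕ) (hm : 0 < m) (p : ℕ → G.V) (pe : ℕ → G.E)
    (hclosed : p m = p 0)
    (hinjE : Set.InjOn pe (Set.Iio m))
    (hinc : ∀ i < m, (G.src (pe i) = p i ∧ G.tgt (pe i) = p (i + 1)) ∨
      (G.src (pe i) = p (i + 1) ∧ G.tgt (pe i) = p i))
    (T : Set (Set (AddCircle (5 : ℝ)))) (hT : ∀ A ∈ T, Graphic 5 A)
    (hAmp : ∃ z : ℤ, ∀ A ∈ T, A ⊆ openArc 5 (z : ℝ) ((z : ℝ) + 3))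
    (cap : G.E → Set (AddCircle (5 : ℝ)))
    (hcapC : ∀ i < m, cap (pe i) ∈ T)
    (hcapO : ∀ e : G.E, (∀ j < m, e ≠ pe j) → cap e = openArc 5 1 4)
    (hG : ((5 : ℝ) : EReal) ≤ circFlowNumber G) :
    ¬ HasCapFlow 5 G cap := by
  classical
  rintro ⟨σ, f, hfl, hcap⟩
  haveI : Nonempty G.E := ⟨pe 0⟩
  obtain ⟨z, hz⟩ := hAmp
  set t : ℝ := 1 - (z:ℝ) with ht
  set T5 : AddCircle (5:ℝ) := ((t : ℝ) : AddCircle (5:ℝ)) with hT5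
  set ε : ℕ → ℤ := fun i => if G.src (pe i) = p i then 1 else -1 with hε
  set d : G.E → ℤ := fun e => ∑ i ∈ range m, if pe i = e then ε i else 0 with hd
  set f' : G.E → AddCircle (5:ℝ) := fun e => f e + ((σ e : ℤ) * d e) • T5 with hf'
  -- d is a circulation
  have hdflow : ∀ v, (∑ e ∈ univ.filter (fun e => G.src e = v), d e)
      = ∑ e ∈ univ.filter (fun e => G.tgt e = v), d e := by
    intro v
    have inner : ∀ q : G.E → G.V, (∑ e ∈ univ.filter (fun e => q e = v), d e)
        = ∑ i ∈ range m, if q (pe i) = v then ε i else 0 := by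
      intro q
      rw [Finset.sum_filter]
      have h1 : ∀ e, (if q e = v then d e else 0)
          = ∑ i ∈ range m, if q e = v then (if pe i = e then ε i else 0) else 0 := by
        intro e
        split_ifs with h
        · rw [hd]
        · rw [Finset.sum_const_zero]
      simp_rw [h1]
      rw [Finset.sum_comm]
      apply Finset.sum_congr rfl
      intro i _
      rw [Finset.sum_eq_single (pe i)]
      · simp
      · intro e _ hne
        split_ifs with h1' h2' <;> first | rfl | (exact absurd h2'.symm hne)
      · simp
    rw [inner G.src, inner G.tgt, ← sub_eq_zero, ← Finset.sum_sub_distrib]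
    have hterm : ∀ i ∈ range m,
        ((if G.src (pe i) = v then ε i else 0) - (if G.tgt (pe i) = v then ε i else 0))
        = ((if p i = v then (1:ℤ) else 0) - (if p (i+1) = v then (1:ℤ) else 0)) := by
      intro i hi
      have him := Finset.mem_range.1 hi
      rcases hinc i him with ⟨hs, htg⟩ | ⟨hs, htg⟩
      · have hεi : ε i = 1 := by rw [hε]; exact if_pos hs
        rw [hs, htg, hεi]
      · by_cases hpp : p (i+1) = p i
        · rw [hs, htg, hpp]; ring
        · have hεi : ε i = -1 := by
            rw [hε]
            exact if_neg (by rw [hs]; exact fun h => hpp h)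
          rw [hs, htg, hεi]
          split_ifs <;> ring
    rw [Finset.sum_congr rfl hterm]
    have : (∑ i ∈ range m,
        ((if p i = v then (1:ℤ) else 0) - (if p (i+1) = v then (1:ℤ) else 0)))
        = (if p 0 = v then (1:ℤ) else 0) - (if p m = v then (1:ℤ) else 0) :=
      Finset.sum_range_sub' (fun j => if p j = v then (1:ℤ) else 0) m
    rw [this, hclosed, sub_self]
  -- f' is a flow on σ
  have hfl' : G.IsFlowOn σ f' := by
    unfold Multigraph.IsFlowOn at hfl ⊢
    have hptw : (fun e => (σ e : ℤ) • f' e)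
        = fun e => ((σ e : ℤ) • f e) + (d e) • T5 := by
      funext e
      rw [hf']
      simp only []
      rw [smul_add, smul_smul]
      congr 2
      have : (σ e : ℤ) * ((σ e : ℤ) * d e) = ((σ e : ℤ) * (σ e : ℤ)) * d e := by ring
      rw [this]
      have h1 : (σ e : ℤ) * (σ e : ℤ) = 1 := by
        rcases Int.units_eq_one_or (σ e) with h | h <;> rw [h] <;> norm_num
      rw [h1, one_mul]
    rw [hptw]
    rw [isFlow_iff_exF] at hfl ⊢
    intro v
    rw [exF_add, hfl v, zero_add]
    unfold exF
    rw [← Finset.sum_smul, ← Finset.sum_smul, ← sub_smul, hdflow v, sub_self, zero_smul]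
  -- capacities
  have hcap' : ∀ e, f' e ∈ openArc 5 1 4 := by
    intro e
    by_cases hcyc : ∃ i, i < m ∧ pe i = e
    · obtain ⟨i, him, rfl⟩ := hcyc
      have hde : d (pe i) = ε i := by
        rw [hd]
        simp only []
        rw [Finset.sum_eq_single i]
        · rw [if_pos rfl]
        · intro j hj hne
          rw [if_neg]
          intro hpe
          exact hne (hinjE (Finset.mem_range.1 hj) him hpe)
        · intro h
          exact absurd (Finset.mem_range.2 him) h
      have hA : cap (pe i) ∈ T := hcapC i him
      have hsub : cap (pe i) ⊆ openArc 5 (z:ℝ) ((z:ℝ)+3) := hz _ hA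
      have hsym : ∀ x ∈ cap (pe i), -x ∈ cap (pe i) :=
        fun x hx => graphic_neg_mem (hT _ hA) hx
      have hfe : f (pe i) ∈ cap (pe i) := hcap _
      have hc : (σ (pe i) : ℤ) * d (pe i) = 1 ∨ (σ (pe i) : ℤ) * d (pe i) = -1 := by
        rw [hde]
        have hεc : ε i = 1 ∨ ε i = -1 := by
          simp only [hε]; split_ifs <;> simp
        rcases Int.units_eq_one_or (σ (pe i)) with h | h <;>
          rcases hεc with h' | h' <;> rw [h, h'] <;> norm_num
      rw [hf']
      simp only []
      rcases hc with h | h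
      · rw [h, one_smul]
        exact shift_mem_arc14 z (hsub hfe)
      · rw [h]
        have h2 : -(f (pe i)) + T5 ∈ openArc 5 1 4 :=
          shift_mem_arc14 z (hsub (hsym _ hfe))
        have h3 : f (pe i) + (-1:ℤ) • T5 = -((-(f (pe i))) + T5) := by abel
        rw [h3]
        exact neg_mem_arc14 h2
    · push_neg at hcyc
      have hde : d e = 0 := by
        rw [hd]
        simp only []
        apply Finset.sum_eq_zero
        intro i hi
        exact if_neg (hcyc i (Finset.mem_range.1 hi))
      have hcape : cap e = openArc 5 1 4 :=
        hcapO e (fun j hj hne => (hcyc j hj) hne.symm)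
      rw [hf']
      simp only []
      rw [hde, mul_zero, zero_smul, add_zero]
      rw [← hcape]
      exact hcap e
  exact no_arc14_flow G hG ⟨σ, f', hfl', hcap'⟩

open Finset

section Glue

variable (G : Multigraph) (H : G.E → Multigraph) (a b : ∀ e, (H e).V)

lemma erEmbed_eq_inl_iff (e : G.E) (y : (H e).V) (v : G.V) (hab : a e ≠ b e) :
    erEmbed G H a b e y = Sum.inl v ↔
      (y = a e ∧ G.src e = v) ∨ (y = b e ∧ G.tgt e = v) := by
  unfold erEmbed
  split_ifs with h1 h2
  · subst h1
    simp only [Sum.inl.injEq]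
    constructor
    · intro h; exact Or.inl ⟨trivial, h⟩
    · rintro (⟨-, h⟩ | ⟨h, -⟩)
      · exact h
      · exact absurd h hab
  · subst h2
    simp only [Sum.inl.injEq]
    constructor
    · intro h; exact Or.inr ⟨trivial, h⟩
    · rintro (⟨h, -⟩ | ⟨-, h⟩)
      · exact absurd h h1
      · exact h
  · constructor
    · intro h; exact absurd h (by simp)
    · rintro (⟨h, -⟩ | ⟨h, -⟩)
      · exact absurd h h1
      · exact absurd h h2

lemma erEmbed_eq_inr_same (e : G.E) (y : (H e).V) (x : (H e).V)
    (hx1 : x ≠ a e) (hx2 : x ≠ b e) :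
    erEmbed G H a b e y = Sum.inr ⟨e, ⟨x, hx1, hx2⟩⟩ ↔ y = x := by
  unfold erEmbed
  split_ifs with h1 h2
  · constructor
    · intro h; exact absurd h (by simp)
    · intro h; exact absurd (h ▸ h1) hx1
  · constructor
    · intro h; exact absurd h (by simp)
    · intro h; exact absurd (h ▸ h2) hx2
  · simp only [Sum.inr.injEq, Sigma.mk.inj_iff, heq_eq_eq, Subtype.mk.injEq]
    constructor
    · rintro ⟨-, h⟩; exact h
    · intro h; exact ⟨trivial, h⟩

lemma erEmbed_ne_inr (e e₀ : G.E) (hne : e ≠ e₀) (y : (H e).V) (x : (H e₀).V)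
    (hx1 : x ≠ a e₀) (hx2 : x ≠ b e₀) :
    erEmbed G H a b e y ≠ Sum.inr ⟨e₀, ⟨x, hx1, hx2⟩⟩ := by
  unfold erEmbed
  split_ifs with h1 h2
  · simp
  · simp
  · simp only [ne_eq, Sum.inr.injEq, Sigma.mk.inj_iff]
    intro h
    exact hne h.1

/-- Splitting a filtered sum over the sigma edge type. -/
lemma sum_sigma_filter {M : Type*} [AddCommMonoid M]
    (w : (Σ e : G.E, (H e).E) → M) (P : (Σ e : G.E, (H e).E) → Prop) [DecidablePred P] :
    ∑ ee ∈ univ.filter P, w ee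
      = ∑ e, ∑ ε ∈ univ.filter (fun ε => P ⟨e, ε⟩), w ⟨e, ε⟩ := by
  rw [Finset.sum_filter, ← Finset.univ_sigma_univ, Finset.sum_sigma]
  apply Finset.sum_congr rfl
  intro e _
  rw [Finset.sum_filter]

end Glue

open Finset

lemma sum_eq_pair {V : Type*} [Fintype V] [DecidableEq V] {M : Type*} [AddCommMonoid M]
    (F : V → M) (a b : V) (hab : a ≠ b) (h : ∀ u, u ≠ a → u ≠ b → F u = 0) :
    ∑ u, F u = F a + F b := by
  classical
  rw [← Finset.add_sum_erase _ F (mem_univ a)]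
  congr 1
  rw [← Finset.add_sum_erase _ F (Finset.mem_erase.2 ⟨Ne.symm hab, mem_univ b⟩),
    Finset.sum_eq_zero, add_zero]
  intro u hu
  obtain ⟨hub, hu2⟩ := Finset.mem_erase.1 hu
  obtain ⟨hua, -⟩ := Finset.mem_erase.1 hu2
  exact h u hua hub

section Glue

variable (G : Multigraph) (H : G.E → Multigraph) (a b : ∀ e, (H e).V)

lemma sum_sigma_filter' {M : Type*} [AddCommMonoid M]
    (w : (edgeReplace G H a b).E → M) (P : (edgeReplace G H a b).E → Prop) [inst : DecidablePred P] :
    ∑ ee ∈ univ.filter P, w ee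
      = ∑ e, ∑ ε ∈ @Finset.filter _ (fun ε => P ⟨e, ε⟩) (fun ε => inst ⟨e, ε⟩) univ, w ⟨e, ε⟩ := by
  rw [Finset.sum_filter]
  letI : ∀ ee : (Σ e : G.E, (H e).E), Decidable (P ee) := inst
  have h1 : (∑ ee : (edgeReplace G H a b).E, if P ee then w ee else 0)
      = ∑ ee : (Σ e : G.E, (H e).E), if P ee then w ee else 0 :=
    Fintype.sum_equiv (Equiv.refl _) _ _ (fun _ => rfl)
  rw [h1, ← Finset.univ_sigma_univ, Finset.sum_sigma]
  apply Finset.sum_congr rfl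
  intro e _
  rw [Finset.sum_filter]

/-- Bridging filters that differ only by defeq/instances. -/
lemma sum_filter_iff {α : Type*} {M : Type*} [AddCommMonoid M] {p q : α → Prop}
    [DecidablePred p] [DecidablePred q] (hpq : ∀ x, p x ↔ q x) (s : Finset α) (f : α → M) :
    ∑ x ∈ s.filter p, f x = ∑ x ∈ s.filter q, f x := by
  rw [Finset.filter_congr (fun x _ => hpq x)]

theorem glue (hab : ∀ e, a e ≠ b e)
    (σ : (edgeReplace G H a b).E → ℤˣ) (g : (edgeReplace G H a b).E → AddCircle (5:ℝ))
    (hfl : (edgeReplace G H a b).IsFlowOn σ g)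
    (hcap : ∀ ee, g ee ∈ openArc 5 1 4) :
    HasCapFlow 5 G (fun e => CP 5 (H e) (a e) (b e)) := by
  classical
  set w : (edgeReplace G H a b).E → AddCircle (5:ℝ) := fun ee => ((σ ee : ℤ) • g ee) with hw
  have hflw : ∀ v'', exF (edgeReplace G H a b) w v'' = 0 :=
    (isFlow_iff_exF (edgeReplace G H a b) w).1 hfl
  set exH : (e : G.E) → (H e).V → AddCircle (5:ℝ) :=
    fun e x => exF (H e) (fun ε => w ⟨e, ε⟩) x with hexH
  set t : G.E → AddCircle (5:ℝ) := fun e => - exH e (a e) with htdef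
  have ht_e : ∀ e, t e = - exH e (a e) := fun e => rfl
  -- Fact A : conservation at internal vertices
  have factA : ∀ (e₀ : G.E) (x : (H e₀).V), x ≠ a e₀ → x ≠ b e₀ → exH e₀ x = 0 := by
    intro e₀ x hx1 hx2
    have : exH e₀ x = exF (edgeReplace G H a b) w (Sum.inr ⟨e₀, ⟨x, hx1, hx2⟩⟩) := by
      show exF (H e₀) (fun ε => w ⟨e₀, ε⟩) x = _
      unfold exF
      rw [sum_sigma_filter' G H a b w
          (fun ee => (edgeReplace G H a b).src ee = Sum.inr ⟨e₀, ⟨x, hx1, hx2⟩⟩) (inst := fun ee => (edgeReplace G H a b).decV _ _),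
        sum_sigma_filter' G H a b w
          (fun ee => (edgeReplace G H a b).tgt ee = Sum.inr ⟨e₀, ⟨x, hx1, hx2⟩⟩) (inst := fun ee => (edgeReplace G H a b).decV _ _)]
      congr 1
      · rw [eq_comm]
        rw [Finset.sum_eq_single e₀]
        · rw [Finset.sum_filter, Finset.sum_filter]
          apply Finset.sum_congr rfl
          intro ε _
          by_cases h : (H e₀).src ε = x
          · rw [if_pos (show (edgeReplace G H a b).src ⟨e₀, ε⟩ = Sum.inr ⟨e₀, ⟨x, hx1, hx2⟩⟩
                from (erEmbed_eq_inr_same G H a b e₀ ((H e₀).src ε) x hx1 hx2).2 h), if_pos h]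
          · rw [if_neg (show ¬ (edgeReplace G H a b).src ⟨e₀, ε⟩ = Sum.inr ⟨e₀, ⟨x, hx1, hx2⟩⟩
                from fun hh => h ((erEmbed_eq_inr_same G H a b e₀ _ x hx1 hx2).1 hh)), if_neg h]
        · intro e _ hne
          rw [Finset.sum_filter]
          apply Finset.sum_eq_zero
          intro ε _
          exact if_neg (erEmbed_ne_inr G H a b e e₀ hne ((H e).src ε) x hx1 hx2)
        · intro h; exact absurd (mem_univ e₀) h
      · rw [eq_comm]
        rw [Finset.sum_eq_single e₀]
        · rw [Finset.sum_filter, Finset.sum_filter]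
          apply Finset.sum_congr rfl
          intro ε _
          by_cases h : (H e₀).tgt ε = x
          · rw [if_pos (show (edgeReplace G H a b).tgt ⟨e₀, ε⟩ = Sum.inr ⟨e₀, ⟨x, hx1, hx2⟩⟩
                from (erEmbed_eq_inr_same G H a b e₀ ((H e₀).tgt ε) x hx1 hx2).2 h), if_pos h]
          · rw [if_neg (show ¬ (edgeReplace G H a b).tgt ⟨e₀, ε⟩ = Sum.inr ⟨e₀, ⟨x, hx1, hx2⟩⟩
                from fun hh => h ((erEmbed_eq_inr_same G H a b e₀ _ x hx1 hx2).1 hh)), if_neg h]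
        · intro e _ hne
          rw [Finset.sum_filter]
          apply Finset.sum_eq_zero
          intro ε _
          exact if_neg (erEmbed_ne_inr G H a b e e₀ hne ((H e).tgt ε) x hx1 hx2)
        · intro h; exact absurd (mem_univ e₀) h
    rw [this]; exact hflw _
  -- Fact D : excess at the second terminal
  have factD : ∀ e, exH e (b e) = t e := by
    intro e
    have hsum : ∑ x, exH e x = 0 := exF_sum_eq_zero (H e) _
    rw [sum_eq_pair (exH e) (a e) (b e) (hab e) (factA e)] at hsum
    rw [ht_e]
    rw [← sub_eq_zero]
    rw [← hsum]
    abel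
  -- per-gadget splitting at a glued vertex
  have hsplit : ∀ (e : G.E) (q : (H e).E → (H e).V) (v : G.V),
      (∑ ε ∈ univ.filter (fun ε => erEmbed G H a b e (q ε) = Sum.inl v), w ⟨e, ε⟩)
        = (if G.src e = v then ∑ ε ∈ univ.filter (fun ε => q ε = a e), w ⟨e, ε⟩ else 0)
          + (if G.tgt e = v then ∑ ε ∈ univ.filter (fun ε => q ε = b e), w ⟨e, ε⟩ else 0) := by
    intro e q v
    rw [Finset.sum_filter]
    have hstep : (∑ ε, if erEmbed G H a b e (q ε) = Sum.inl v then w ⟨e, ε⟩ else 0)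
        = ∑ ε, ((if q ε = a e ∧ G.src e = v then w ⟨e, ε⟩ else 0)
          + (if q ε = b e ∧ G.tgt e = v then w ⟨e, ε⟩ else 0)) := by
      apply Finset.sum_congr rfl
      intro ε _
      by_cases h1 : q ε = a e ∧ G.src e = v
      · rw [if_pos ((erEmbed_eq_inl_iff G H a b e (q ε) v (hab e)).2 (Or.inl h1)),
          if_pos h1, if_neg, add_zero]
        rintro ⟨hqb, -⟩
        exact hab e (h1.1.symm.trans hqb)
      · by_cases h2 : q ε = b e ∧ G.tgt e = v
        · rw [if_pos ((erEmbed_eq_inl_iff G H a b e (q ε) v (hab e)).2 (Or.inr h2)),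
            if_neg h1, if_pos h2, zero_add]
        · rw [if_neg, if_neg h1, if_neg h2, add_zero]
          intro hmem
          rcases (erEmbed_eq_inl_iff G H a b e (q ε) v (hab e)).1 hmem with h | h
          · exact h1 h
          · exact h2 h
    rw [hstep, Finset.sum_add_distrib]
    congr 1
    · by_cases hc : G.src e = v
      · rw [if_pos hc, Finset.sum_filter]
        apply Finset.sum_congr rfl
        intro ε _
        by_cases hq : q ε = a e
        · rw [if_pos ⟨hq, hc⟩, if_pos hq]
        · rw [if_neg (fun h => hq h.1), if_neg hq]
      · rw [if_neg hc]
        apply Finset.sum_eq_zero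
        intro ε _
        exact if_neg (fun h => hc h.2)
    · by_cases hc : G.tgt e = v
      · rw [if_pos hc, Finset.sum_filter]
        apply Finset.sum_congr rfl
        intro ε _
        by_cases hq : q ε = b e
        · rw [if_pos ⟨hq, hc⟩, if_pos hq]
        · rw [if_neg (fun h => hq h.1), if_neg hq]
      · rw [if_neg hc]
        apply Finset.sum_eq_zero
        intro ε _
        exact if_neg (fun h => hc h.2)
  -- Fact B : t is conserved on G
  have factB : ∀ v : G.V,
      ∑ e ∈ univ.filter (fun e => G.src e = v), t e
        = ∑ e ∈ univ.filter (fun e => G.tgt e = v), t e := by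
    intro v
    have h0 : exF (edgeReplace G H a b) w (Sum.inl v)
        = ∑ e, (((if G.src e = v then ∑ ε ∈ univ.filter (fun ε => (H e).src ε = a e), w ⟨e, ε⟩ else 0)
            + (if G.tgt e = v then ∑ ε ∈ univ.filter (fun ε => (H e).src ε = b e), w ⟨e, ε⟩ else 0))
          - ((if G.src e = v then ∑ ε ∈ univ.filter (fun ε => (H e).tgt ε = a e), w ⟨e, ε⟩ else 0)
            + (if G.tgt e = v then ∑ ε ∈ univ.filter (fun ε => (H e).tgt ε = b e), w ⟨e, ε⟩ else 0))) := by
      unfold exF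
      rw [sum_sigma_filter' G H a b w
          (fun ee => (edgeReplace G H a b).src ee = Sum.inl v) (inst := fun ee => (edgeReplace G H a b).decV _ _),
        sum_sigma_filter' G H a b w
          (fun ee => (edgeReplace G H a b).tgt ee = Sum.inl v) (inst := fun ee => (edgeReplace G H a b).decV _ _),
        ← Finset.sum_sub_distrib]
      apply Finset.sum_congr rfl
      intro e _
      congr 1
      · exact hsplit e (fun ε => (H e).src ε) v
      · exact hsplit e (fun ε => (H e).tgt ε) v
    rw [hflw (Sum.inl v)] at h0
    rw [← sub_eq_zero, Finset.sum_filter, Finset.sum_filter, ← Finset.sum_sub_distrib]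
    have key : ∀ e : G.E, ((if G.src e = v then t e else 0) - (if G.tgt e = v then t e else 0))
        = -(((if G.src e = v then ∑ ε ∈ univ.filter (fun ε => (H e).src ε = a e), w ⟨e, ε⟩ else 0)
            + (if G.tgt e = v then ∑ ε ∈ univ.filter (fun ε => (H e).src ε = b e), w ⟨e, ε⟩ else 0))
          - ((if G.src e = v then ∑ ε ∈ univ.filter (fun ε => (H e).tgt ε = a e), w ⟨e, ε⟩ else 0)
            + (if G.tgt e = v then ∑ ε ∈ univ.filter (fun ε => (H e).tgt ε = b e), w ⟨e, ε⟩ else 0))) := by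
      intro e
      set SA := ∑ ε ∈ univ.filter (fun ε => (H e).src ε = a e), w ⟨e, ε⟩ with hSA
      set SB := ∑ ε ∈ univ.filter (fun ε => (H e).src ε = b e), w ⟨e, ε⟩ with hSB
      set TA := ∑ ε ∈ univ.filter (fun ε => (H e).tgt ε = a e), w ⟨e, ε⟩ with hTA
      set TB := ∑ ε ∈ univ.filter (fun ε => (H e).tgt ε = b e), w ⟨e, ε⟩ with hTB
      have hA : SA - TA = exH e (a e) := rfl
      have hB : SB - TB = exH e (b e) := rfl
      by_cases h1 : G.src e = v <;> by_cases h2 : G.tgt e = v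
      · rw [if_pos h1, if_pos h2, if_pos h1, if_pos h2, if_pos h1, if_pos h2]
        have hz : exH e (a e) + exH e (b e) = 0 := by
          rw [factD e, ht_e e]; abel
        rw [sub_self, show SA + SB - (TA + TB) = (SA - TA) + (SB - TB) from by abel,
          hA, hB, hz, neg_zero]
      · rw [if_pos h1, if_neg h2, if_pos h1, if_neg h2, if_pos h1, if_neg h2]
        have hta2 : t e = -(SA - TA) := by rw [hA]; try exact ht_e e
        rw [sub_zero, add_zero, add_zero, hta2]
      · rw [if_neg h1, if_pos h2, if_neg h1, if_pos h2, if_neg h1, if_pos h2]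
        have htb2 : t e = SB - TB := (hB.trans (factD e)).symm
        rw [zero_sub, zero_add, zero_add, htb2]
      · rw [if_neg h1, if_neg h2, if_neg h1, if_neg h2, if_neg h1, if_neg h2]
        abel
    rw [Finset.sum_congr rfl (fun e _ => key e), Finset.sum_neg_distrib, ← h0, neg_zero]
  -- Fact E : the through-value lies in the capacity of each gadget
  have factE : ∀ e : G.E, t e ∈ CP 5 (H e) (a e) (b e) := by
    intro e
    refine ⟨fun o => o.elim 1 (fun ε => σ ⟨e, ε⟩),
      fun o => o.elim (t e) (fun ε => g ⟨e, ε⟩), ?_, ?_, rfl⟩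
    · -- flow on the gadget plus virtual edge
      intro v
      change (H e).V at v
      have hsrc' : (∑ o ∈ univ.filter (fun o => ((H e).addEdge (a e) (b e)).src o = v),
          (((o.elim 1 (fun ε => σ ⟨e, ε⟩) : ℤˣ) : ℤ) • (o.elim (t e) (fun ε => g ⟨e, ε⟩))))
          = (if a e = v then t e else 0)
            + ∑ ε ∈ univ.filter (fun ε => (H e).src ε = v), w ⟨e, ε⟩ := by
        refine (Finset.sum_filter _ _).trans ?_
        refine (Fintype.sum_equiv (Equiv.refl _) _ (fun o : Option (H e).E =>
            (if ((H e).addEdge (a e) (b e)).src o = v then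
              (((o.elim 1 (fun ε => σ ⟨e, ε⟩) : ℤˣ) : ℤ) • (o.elim (t e) (fun ε => g ⟨e, ε⟩)))
            else 0)) (fun _ => rfl)).trans ?_
        rw [Fintype.sum_option]
        congr 1
        · by_cases hv : a e = v
          · rw [if_pos (show ((H e).addEdge (a e) (b e)).src none = v from hv), if_pos hv]
            show ((1 : ℤˣ) : ℤ) • t e = t e
            rw [show ((1:ℤˣ):ℤ) = 1 from rfl, one_smul]
          · rw [if_neg (show ¬ ((H e).addEdge (a e) (b e)).src none = v from hv), if_neg hv]
        · rw [Finset.sum_filter]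
          apply Finset.sum_congr rfl
          intro ε _
          by_cases hv : (H e).src ε = v
          · rw [if_pos (show ((H e).addEdge (a e) (b e)).src (some ε) = v from hv), if_pos hv]
            rfl
          · rw [if_neg (show ¬ ((H e).addEdge (a e) (b e)).src (some ε) = v from hv), if_neg hv]
      have htgt' : (∑ o ∈ univ.filter (fun o => ((H e).addEdge (a e) (b e)).tgt o = v),
          (((o.elim 1 (fun ε => σ ⟨e, ε⟩) : ℤˣ) : ℤ) • (o.elim (t e) (fun ε => g ⟨e, ε⟩))))
          = (if b e = v then t e else 0)
            + ∑ ε ∈ univ.filter (fun ε => (H e).tgt ε = v), w ⟨e, ε⟩ := by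
        refine (Finset.sum_filter _ _).trans ?_
        refine (Fintype.sum_equiv (Equiv.refl _) _ (fun o : Option (H e).E =>
            (if ((H e).addEdge (a e) (b e)).tgt o = v then
              (((o.elim 1 (fun ε => σ ⟨e, ε⟩) : ℤˣ) : ℤ) • (o.elim (t e) (fun ε => g ⟨e, ε⟩)))
            else 0)) (fun _ => rfl)).trans ?_
        rw [Fintype.sum_option]
        congr 1
        · by_cases hv : b e = v
          · rw [if_pos (show ((H e).addEdge (a e) (b e)).tgt none = v from hv), if_pos hv]
            show ((1 : ℤˣ) : ℤ) • t e = t e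
            rw [show ((1:ℤˣ):ℤ) = 1 from rfl, one_smul]
          · rw [if_neg (show ¬ ((H e).addEdge (a e) (b e)).tgt none = v from hv), if_neg hv]
        · rw [Finset.sum_filter]
          apply Finset.sum_congr rfl
          intro ε _
          by_cases hv : (H e).tgt ε = v
          · rw [if_pos (show ((H e).addEdge (a e) (b e)).tgt (some ε) = v from hv), if_pos hv]
            rfl
          · rw [if_neg (show ¬ ((H e).addEdge (a e) (b e)).tgt (some ε) = v from hv), if_neg hv]
      have middle : (if a e = v then t e else 0)
            + (∑ ε ∈ univ.filter (fun ε => (H e).src ε = v), w ⟨e, ε⟩)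
          = (if b e = v then t e else 0)
            + ∑ ε ∈ univ.filter (fun ε => (H e).tgt ε = v), w ⟨e, ε⟩ := by
        by_cases hva : a e = v
        · have hvb : ¬ b e = v := fun h => hab e (hva.trans h.symm)
          rw [if_pos hva, if_neg hvb, zero_add]
          subst hva
          have hT : t e = -((∑ ε ∈ univ.filter (fun ε => (H e).src ε = a e), w ⟨e, ε⟩)
              - ∑ ε ∈ univ.filter (fun ε => (H e).tgt ε = a e), w ⟨e, ε⟩) := ht_e e
          rw [hT]
          abel
        · by_cases hvb : b e = v
          · rw [if_neg hva, if_pos hvb, zero_add]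
            subst hvb
            have hT : t e = (∑ ε ∈ univ.filter (fun ε => (H e).src ε = b e), w ⟨e, ε⟩)
                - ∑ ε ∈ univ.filter (fun ε => (H e).tgt ε = b e), w ⟨e, ε⟩ := (factD e).symm
            rw [hT]
            abel
          · rw [if_neg hva, if_neg hvb, zero_add, zero_add]
            have h0 : (∑ ε ∈ univ.filter (fun ε => (H e).src ε = v), w ⟨e, ε⟩)
                - (∑ ε ∈ univ.filter (fun ε => (H e).tgt ε = v), w ⟨e, ε⟩) = 0 :=
              factA e v (fun h => hva h.symm) (fun h => hvb h.symm)
            exact sub_eq_zero.1 h0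
      convert hsrc'.trans (middle.trans htgt'.symm)
    · intro ε
      rw [show (5:ℝ) - 1 = 4 by norm_num]
      exact hcap ⟨e, ε⟩
  -- assemble the capacitated flow on G
  refine ⟨fun _ => 1, t, ?_, factE⟩
  have : (fun e => (((1:ℤˣ) : ℤ)) • t e) = t := by
    funext e
    rw [show ((1:ℤˣ):ℤ) = 1 from rfl, one_smul]
  show Multigraph.IsFlow _ _
  rw [show (fun e => (((fun (_ : G.E) => (1:ℤˣ)) e : ℤ)) • t e) = t from this]
  exact factB

end Glue

open Finset

lemma isFlow_map (G : Multigraph) {M N : Type*} [AddCommGroup M] [AddCommGroup N]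
    (φ : M →+ N) (w : G.E → M) (h : G.IsFlow w) : G.IsFlow (fun e => φ (w e)) := by
  rw [isFlow_iff_exF] at h ⊢
  intro v
  rw [exF_hom φ G w v, h v, map_zero]

lemma part2 (G : Multigraph)
    (cap : G.E → Set (AddCircle (5 : ℝ)))
    (hnoflow : ¬ HasCapFlow 5 G cap)
    (H : G.E → Multigraph) (a b : ∀ e, (H e).V) (hanb : ∀ e, a e ≠ b e)
    (hCP : ∀ e, CP 5 (H e) (a e) (b e) = cap e) :
    ((5 : ℝ) : EReal) ≤ circFlowNumber (edgeReplace G H a b) := by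
  classical
  apply le_sInf
  rintro x ⟨r, rfl, hC⟩
  by_cases hr5 : (5:ℝ) ≤ r
  · exact_mod_cast hr5
  push_neg at hr5
  exfalso
  obtain ⟨σ, f, hflow, hbnd⟩ := hC
  set φ : ℝ →+ AddCircle (5:ℝ) := QuotientAddGroup.mk' (AddSubgroup.zmultiples (5:ℝ)) with hφ
  have hφ_eq : ∀ y : ℝ, φ y = ((y : ℝ) : AddCircle (5:ℝ)) := fun y => rfl
  have hcapflow : HasCapFlow 5 G (fun e => CP 5 (H e) (a e) (b e)) := by
    by_cases hne : Nonempty (edgeReplace G H a b).E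
    · have hr2 : (2:ℝ) ≤ r := by
        obtain ⟨e⟩ := hne
        have h1 := (hbnd e).1
        have h2 := (hbnd e).2
        linarith
      have hr0 : (0:ℝ) < r := by linarith
      refine glue G H a b hanb σ
        (fun ee => (((5/r) * f ee : ℝ) : AddCircle (5:ℝ))) ?_ ?_
      · -- flow
        have h1 : (edgeReplace G H a b).IsFlow
            (fun ee => (5/r) * ((σ ee : ℤ) • f ee)) :=
          isFlow_smul _ _ _ hflow
        have h2 : (edgeReplace G H a b).IsFlow
            (fun ee => φ ((5/r) * ((σ ee : ℤ) • f ee))) := isFlow_map _ φ _ h1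
        unfold Multigraph.IsFlowOn
        have h3 : (fun ee => (σ ee : ℤ) • (((5/r) * f ee : ℝ) : AddCircle (5:ℝ)))
            = fun ee => φ ((5/r) * ((σ ee : ℤ) • f ee)) := by
          funext ee
          have h4 : (5/r) * ((σ ee : ℤ) • f ee) = (σ ee : ℤ) • ((5/r) * f ee) := by
            rw [zsmul_eq_mul, zsmul_eq_mul]; ring
          rw [h4, map_zsmul, hφ_eq]
        rw [h3]
        exact h2
      · -- capacities
        intro ee
        rw [openArc14]
        refine ⟨(5/r) * f ee, ⟨?_, ?_⟩, rfl⟩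
        · have h1 := (hbnd ee).1
          have h5r : 1 < 5/r := by
            rw [lt_div_iff₀ hr0]; linarith
          nlinarith
        · have h2 := (hbnd ee).2
          have key : (5/r) * f ee ≤ 5 - 5/r := by
            have : (5/r) * f ee ≤ (5/r) * (r - 1) := by
              apply mul_le_mul_of_nonneg_left h2
              positivity
            calc (5/r) * f ee ≤ (5/r) * (r - 1) := this
              _ = 5 - 5/r := by field_simp
          have h5r : 1 < 5/r := by
            rw [lt_div_iff₀ hr0]; linarith
          linarith
    · have hempty : IsEmpty (edgeReplace G H a b).E := not_nonempty_iff.1 hne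
      refine glue G H a b hanb (fun ee => (hempty.elim ee : ℤˣ))
        (fun ee => (hempty.elim ee : AddCircle (5:ℝ))) ?_ ?_
      · intro v
        rw [show (univ : Finset (edgeReplace G H a b).E) = ∅ from Finset.univ_eq_empty,
          Finset.filter_empty, Finset.filter_empty]
      · intro ee
        exact (hempty.elim ee)
  have : (fun e => CP 5 (H e) (a e) (b e)) = cap := funext hCP
  rw [this] at hcapflow
  exact hnoflow hcapflow

/-- Let `C` be a cycle of simple edges in `G` and `T` a
collection of graphic open 5-capacities whose union has amplitude at most 3
(i.e. is contained in an integer interval of length 3).  Give each edge of `C`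
a capacity from `T` and every other edge the capacity `(1,4)` of a simple
edge.  If `φ_c(G) ≥ 5` then the resulting capacitated graph admits no
sub-5-MCNZF; consequently every graph obtained from `G` by replacing each edge
of `C` by an `A`-edge with `A ∈ T` (realizing each capacity by a g-edge) has
circular flow number at least 5. -/
theorem cycle_replacement (G : Multigraph)
    (m : ℕ) (hm : 0 < m) (p : ℕ → G.V) (pe : ℕ → G.E)
    (hclosed : p m = p 0)
    (hinjV : Set.InjOn p (Set.Iio m)) (hinjE : Set.InjOn pe (Set.Iio m))
    (hinc : ∀ i < m, (G.src (pe i) = p i ∧ G.tgt (pe i) = p (i + 1)) ∨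
      (G.src (pe i) = p (i + 1) ∧ G.tgt (pe i) = p i))
    (T : Set (Set (AddCircle (5 : ℝ)))) (hT : ∀ A ∈ T, Graphic 5 A)
    (hAmp : ∃ z : ℤ, ∀ A ∈ T, A ⊆ openArc 5 (z : ℝ) ((z : ℝ) + 3))
    (cap : G.E → Set (AddCircle (5 : ℝ)))
    (hcapC : ∀ i < m, cap (pe i) ∈ T)
    (hcapO : ∀ e : G.E, (∀ j < m, e ≠ pe j) → cap e = openArc 5 1 4)
    (hG : ((5 : ℝ) : EReal) ≤ circFlowNumber G) :
    ¬ HasCapFlow 5 G cap ∧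
    ∀ (H : G.E → Multigraph) (a b : ∀ e, (H e).V), (∀ e, a e ≠ b e) →
      (∀ e, CP 5 (H e) (a e) (b e) = cap e) →
      ((5 : ℝ) : EReal) ≤ circFlowNumber (edgeReplace G H a b) := by
  have h1 : ¬ HasCapFlow 5 G cap :=
    part1 G m hm p pe hclosed hinjE hinc T hT hAmp cap hcapC hcapO hG
  exact ⟨h1, fun H a b hanb hCP => part2 G cap h1 H a b hanb hCP⟩
end
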